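/- Under the standing assumptions, suppose additionally that φ is finite on all of ℝ^d and M-smooth with respect to a norm ‖·‖. Let x_k with x_k* = ∇φ(x_k), let i_k be an index with f_{i_k}(x_k) ≠ 0 and ∇f_{i_k}(x_k) ≠ 0, and set β_k = ⟨∇f_{i_k}(x_k), x_k⟩ − f_{i_k}(x_k). Then the function g(t) = φ*(x_k* − t∇f_{i_k}(x_k)) + tβ_k is (‖∇f_{i_k}(x_k)‖_*²/M)-strongly convex, and its minimizer t_{k,φ} satisfies |t_{k,φ}| ≤ M |f_{i_k}(x_k)| / ‖∇f_{i_k}(x_k)‖_*². -/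

import Mathlib

open Set Filter Topology MeasureTheory ProbabilityTheory

noncomputable section

abbrev Euc (d : ℕ) := EuclideanSpace ℝ (Fin d)

/-- Real inner product on `ℝ^d`. -/
def rinn {d : ℕ} (x y : Euc d) : ℝ := inner ℝ x y

/-- Effective domain of an extended-real-valued function. -/
def edom {d : ℕ} (φ : Euc d → EReal) : Set (Euc d) := {x | φ x ≠ ⊤}

/-- Convex subdifferential. -/
def subdiff {d : ℕ} (φ : Euc d → EReal) (x : Euc d) : Set (Euc d) :=
  {u | φ x ≠ ⊤ ∧ ∀ y : Euc d, φ x + ((rinn u (y - x) : ℝ) : EReal) ≤ φ y}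

/-- Domain of the subdifferential. -/
def ddom {d : ℕ} (φ : Euc d → EReal) : Set (Euc d) := {x | (subdiff φ x).Nonempty}

/-- Bregman distance `D_φ^{u}(x,y) = φ(y) - φ(x) - ⟨u, y - x⟩`. -/
def breg {d : ℕ} (φ : Euc d → EReal) (u x y : Euc d) : EReal :=
  φ y - φ x - ((rinn u (y - x) : ℝ) : EReal)

/-- Fenchel conjugate (extended-real-valued). -/
def econj {d : ℕ} (φ : Euc d → EReal) (u : Euc d) : EReal :=
  ⨆ x : Euc d, ((rinn u x : ℝ) : EReal) - φ x

/-- Real-valued Fenchel conjugate (under the standing assumptions `econj` is finite). -/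
def rconj {d : ℕ} (φ : Euc d → EReal) (u : Euc d) : ℝ := (econj φ u).toReal

/-- Gradient `∇φ*` of the conjugate. -/
def gradconj {d : ℕ} (φ : Euc d → EReal) (u : Euc d) : Euc d := gradient (rconj φ) u

def ConvexE {d : ℕ} (φ : Euc d → EReal) : Prop :=
  ∀ x y : Euc d, ∀ t : ℝ, 0 < t → t < 1 →
    φ (t • x + (1 - t) • y) ≤ (t : EReal) * φ x + ((1 - t : ℝ) : EReal) * φ y

def StrictConvexOnE {d : ℕ} (φ : Euc d → EReal) (s : Set (Euc d)) : Prop :=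
  ∀ x ∈ s, ∀ y ∈ s, x ≠ y → ∀ t : ℝ, 0 < t → t < 1 →
    φ (t • x + (1 - t) • y) < (t : EReal) * φ x + ((1 - t : ℝ) : EReal) * φ y

def ProperE {d : ℕ} (φ : Euc d → EReal) : Prop :=
  (∃ x, φ x ≠ ⊤) ∧ ∀ x, φ x ≠ ⊥

/-- `φ(x)/‖x‖ → ∞` as `‖x‖ → ∞`. -/
def Supercoercive {d : ℕ} (φ : Euc d → EReal) : Prop :=
  ∀ M : ℝ, ∃ R : ℝ, ∀ x : Euc d, R ≤ ‖x‖ → ((M * ‖x‖ : ℝ) : EReal) ≤ φ x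

/-- Essential strict convexity: strict convexity on the relative interior of the domain. -/
def EssStrictConvexE {d : ℕ} (φ : Euc d → EReal) : Prop :=
  StrictConvexOnE φ (intrinsicInterior ℝ (edom φ))

/-- Standing assumptions on the distance generating function `φ` and constraint set `C`. -/
structure PhiAssump {d : ℕ} (φ : Euc d → EReal) (C : Set (Euc d)) : Prop where
  Cne : C.Nonempty
  Cconv : Convex ℝ C
  Ccl : IsClosed C
  proper : ProperE φ
  conv : ConvexE φ
  lsc : LowerSemicontinuous φ
  coercive : Supercoercive φ
  essstrict : EssStrictConvexE φ
  domC : closure (ddom φ) = C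
  ri_eq : ddom φ = intrinsicInterior ℝ (edom φ)

/-- Standing assumption (iv): Bregman distances tend to zero along convergent sequences. -/
def BregCont {d : ℕ} (φ : Euc d → EReal) : Prop :=
  ∀ x ∈ edom φ, ∀ xk : ℕ → Euc d, ∀ uk : ℕ → Euc d,
    (∀ k, uk k ∈ subdiff φ (xk k)) → Tendsto xk atTop (𝓝 x) →
    Tendsto (fun k => breg φ (uk k) (xk k) x) atTop (𝓝 (0 : EReal))

/-- `f` is continuously differentiable on `Dset ⊇ C`, with gradients `f'`. -/
structure FAssump {d n : ℕ} (f : Fin n → Euc d → ℝ) (f' : Fin n → Euc d → Euc d)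
    (Dset C : Set (Euc d)) : Prop where
  CsubD : C ⊆ Dset
  grad : ∀ i, ∀ x ∈ Dset, HasGradientAt (f i) (f' i x) x
  cont : ∀ i, ContinuousOn (f' i) Dset

/-- Solution set `S = C ∩ f⁻¹(0)`. -/
def solSet {d n : ℕ} (f : Fin n → Euc d → ℝ) (C : Set (Euc d)) : Set (Euc d) :=
  {x ∈ C | ∀ i, f i x = 0}

/-- `N` is a norm on `ℝ^d`. -/
def IsANorm {d : ℕ} (N : Euc d → ℝ) : Prop :=
  (∀ x, N x = 0 ↔ x = 0) ∧ (∀ (c : ℝ) (x : Euc d), N (c • x) = |c| * N x) ∧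
    ∀ x y : Euc d, N (x + y) ≤ N x + N y

/-- Dual norm of `N`. -/
def dualN {d : ℕ} (N : Euc d → ℝ) (u : Euc d) : ℝ :=
  sSup {r : ℝ | ∃ y : Euc d, N y ≤ 1 ∧ r = (rinn u y)}

/-- `φ` is `σ`-strongly convex w.r.t. the norm `N`. -/
def StronglyConvexWrt {d : ℕ} (φ : Euc d → EReal) (σ : ℝ) (N : Euc d → ℝ) : Prop :=
  ∀ x ∈ ddom φ, ∀ y ∈ ddom φ, ∀ u ∈ subdiff φ x,
    ((σ / 2 * (N (x - y)) ^ 2 : ℝ) : EReal) ≤ breg φ u x y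

/-- `φ` is `M`-smooth w.r.t. the norm `N`: finite everywhere (subdifferentiable everywhere)
with the quadratic upper bound. -/
def SmoothWrt {d : ℕ} (φ : Euc d → EReal) (M : ℝ) (N : Euc d → ℝ) : Prop :=
  (∀ x : Euc d, (subdiff φ x).Nonempty) ∧
    ∀ x y : Euc d, ∀ u ∈ subdiff φ x,
      breg φ u x y ≤ ((M / 2 * (N (x - y)) ^ 2 : ℝ) : EReal)

/-- `g` (with gradient `g'`) is star-convex. -/
def StarConvexWith {d : ℕ} (g : Euc d → ℝ) (g' : Euc d → Euc d) : Prop :=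
  (∃ z : Euc d, ∀ y, g z ≤ g y) ∧
    ∀ x z : Euc d, (∀ y, g z ≤ g y) → g x + rinn (g' x) (z - x) ≤ g z

/-- `g` (with gradient `g'`) is strictly star-convex. -/
def StrictStarConvexWith {d : ℕ} (g : Euc d → ℝ) (g' : Euc d → Euc d) : Prop :=
  (∃ z : Euc d, ∀ y, g z ≤ g y) ∧
    ∀ x z : Euc d, (∀ y, g z ≤ g y) → x ≠ z → g x + rinn (g' x) (z - x) < g z

/-- `g` is `μ`-strongly star-convex relative to `φ`. -/
def StronglyStarConvexRel {d : ℕ} (g : Euc d → ℝ) (g' : Euc d → Euc d) (μ : ℝ)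
    (φ : Euc d → EReal) : Prop :=
  (∃ z : Euc d, ∀ y, g z ≤ g y) ∧
    ∀ x : Euc d, ∀ u ∈ subdiff φ x, ∀ z : Euc d, (∀ y, g z ≤ g y) →
      ((g x + rinn (g' x) (z - x) : ℝ) : EReal) + (μ : EReal) * breg φ u x z ≤ (g z : EReal)

def IsAffineF {d : ℕ} (g : Euc d → ℝ) : Prop :=
  ∃ (a : Euc d) (b : ℝ), ∀ x, g x = (rinn a x) + b

/-- Assumption 2: each component is either nonnegative star-convex with a zero in `dom ∂φ`,
nonnegative strictly star-convex, or affine. -/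
def Assump2 {d n : ℕ} (φ : Euc d → EReal) (f : Fin n → Euc d → ℝ)
    (f' : Fin n → Euc d → Euc d) : Prop :=
  ∀ i : Fin n,
    ((∀ x, 0 ≤ f i x) ∧ StarConvexWith (f i) (f' i) ∧ ∃ z ∈ ddom φ, f i z = 0) ∨
    ((∀ x, 0 ≤ f i x) ∧ StrictStarConvexWith (f i) (f' i)) ∨
    IsAffineF (f i)

/-- `g` is `L`-smooth w.r.t. the norm `N` (quadratic upper bound). -/
def LSmoothWrt {d : ℕ} (g : Euc d → ℝ) (g' : Euc d → Euc d) (L : ℝ) (N : Euc d → ℝ) : Prop :=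
  ∀ x y : Euc d, g y ≤ g x + rinn (g' x) (y - x) + L / 2 * (N (x - y)) ^ 2

/-- Hyperplane given by the linearization of `f i` at `x`. -/
def linHyp {d n : ℕ} (f : Fin n → Euc d → ℝ) (f' : Fin n → Euc d → Euc d)
    (i : Fin n) (x : Euc d) : Set (Euc d) :=
  {y | f i x + rinn (f' i x) (y - x) = 0}

/-- Objective of the one-dimensional dual problem defining the exact NBK step size. -/
def lineObj {d n : ℕ} (φ : Euc d → EReal) (f : Fin n → Euc d → ℝ)
    (f' : Fin n → Euc d → Euc d) (i : Fin n) (x u : Euc d) (t : ℝ) : ℝ :=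
  rconj φ (u - t • f' i x) + t * (rinn (f' i x) x - f i x)

/-- Local tangential cone condition with constant `η` on `U`. -/
def TCCOn {d : ℕ} (g : Euc d → ℝ) (g' : Euc d → Euc d) (η : ℝ) (U : Set (Euc d)) : Prop :=
  ∀ x ∈ U, ∀ y ∈ U, |g x + rinn (g' x) (y - x) - g y| ≤ η * |g x - g y|

/-- The set `B_{r,φ}(z)`. -/
def BregBall {d : ℕ} (φ : Euc d → EReal) (C : Set (Euc d)) (r : ℝ) (z : Euc d) :
    Set (Euc d) :=
  {x ∈ C | ∀ u ∈ subdiff φ x, breg φ u x z ≤ (r : EReal)}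

end

section AuxNorm
variable {d : ℕ} {N : Euc d → ℝ}

lemma isanorm_zero (hN : IsANorm N) : N 0 = 0 := (hN.1 0).mpr rfl

lemma isanorm_neg (hN : IsANorm N) (x : Euc d) : N (-x) = N x := by
  have := hN.2.1 (-1) x; simpa using this

lemma isanorm_nonneg (hN : IsANorm N) (x : Euc d) : 0 ≤ N x := by
  have h := hN.2.2 x (-x)
  rw [add_neg_cancel, isanorm_zero hN, isanorm_neg hN] at h
  linarith

lemma isanorm_sum {ι : Type*} (hN : IsANorm N) (s : Finset ι) (g : ι → Euc d) :
    N (∑ i ∈ s, g i) ≤ ∑ i ∈ s, N (g i) := by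
  classical
  induction s using Finset.cons_induction with
  | empty => simp [isanorm_zero hN]
  | cons a s ha ih =>
    rw [Finset.sum_cons, Finset.sum_cons]
    exact le_trans (hN.2.2 _ _) (by linarith)

lemma coord_le_norm (x : Euc d) (i : Fin d) : |x i| ≤ ‖x‖ := by
  have h := abs_real_inner_le_norm (EuclideanSpace.single i (1:ℝ)) x
  rw [EuclideanSpace.inner_single_left] at h
  simpa [EuclideanSpace.norm_single] using h

/-- Upper norm comparison. -/
lemma isanorm_upper (hN : IsANorm N) : ∃ K : ℝ, 0 < K ∧ ∀ x, N x ≤ K * ‖x‖ := by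
  classical
  refine ⟨(∑ i : Fin d, N (EuclideanSpace.single i (1:ℝ))) + 1, ?_, ?_⟩
  · have : 0 ≤ ∑ i : Fin d, N (EuclideanSpace.single i (1:ℝ)) :=
      Finset.sum_nonneg fun i _ => isanorm_nonneg hN _
    linarith
  intro x
  have hx : x = ∑ i : Fin d, x i • EuclideanSpace.single i (1:ℝ) := by
    have h := (EuclideanSpace.basisFun (Fin d) ℝ).sum_repr x
    simp only [EuclideanSpace.basisFun_repr, EuclideanSpace.basisFun_apply] at h
    exact h.symm
  calc N x = N (∑ i : Fin d, x i • EuclideanSpace.single i (1:ℝ)) := by rw [← hx]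
    _ ≤ ∑ i : Fin d, N (x i • EuclideanSpace.single i (1:ℝ)) := isanorm_sum hN _ _
    _ = ∑ i : Fin d, |x i| * N (EuclideanSpace.single i (1:ℝ)) := by
        simp [hN.2.1]
    _ ≤ ∑ i : Fin d, ‖x‖ * N (EuclideanSpace.single i (1:ℝ)) := by
        refine Finset.sum_le_sum fun i _ => ?_
        exact mul_le_mul_of_nonneg_right (coord_le_norm x i) (isanorm_nonneg hN _)
    _ = (∑ i : Fin d, N (EuclideanSpace.single i (1:ℝ))) * ‖x‖ := by
        rw [← Finset.mul_sum, mul_comm]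
    _ ≤ ((∑ i : Fin d, N (EuclideanSpace.single i (1:ℝ))) + 1) * ‖x‖ := by
        have := norm_nonneg x; nlinarith

lemma isanorm_continuous (hN : IsANorm N) : Continuous N := by
  obtain ⟨K, hK, hub⟩ := isanorm_upper hN
  rw [Metric.continuous_iff]
  intro x ε hε
  refine ⟨ε / K, by positivity, fun y hy => ?_⟩
  have h1 : N y - N x ≤ N (y - x) := by
    have := hN.2.2 (y - x) x; simpa using this
  have h2 : N x - N y ≤ N (y - x) := by
    have h3 : N (x - y) = N (y - x) := by
      rw [← isanorm_neg hN (y - x)]; congr 1; abel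
    have h4 : N x ≤ N (x - y) + N y := by
      have := hN.2.2 (x - y) y; simpa using this
    linarith
  have hd : dist (N y) (N x) ≤ K * dist y x := by
    rw [Real.dist_eq, dist_eq_norm]
    have := hub (y - x)
    rw [abs_sub_le_iff]
    constructor <;> linarith
  calc dist (N y) (N x) ≤ K * dist y x := hd
    _ < K * (ε / K) := by exact mul_lt_mul_of_pos_left hy hK
    _ = ε := by field_simp

/-- Lower norm comparison. -/
lemma isanorm_lower (hN : IsANorm N) : ∃ m : ℝ, 0 < m ∧ ∀ x, m * ‖x‖ ≤ N x := by
  by_cases hd : ∀ x : Euc d, x = 0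
  · exact ⟨1, one_pos, fun x => by rw [hd x]; simp [isanorm_zero hN]⟩
  push_neg at hd
  obtain ⟨x₀, hx₀⟩ := hd
  have hsne : (Metric.sphere (0 : Euc d) 1).Nonempty := by
    refine ⟨(‖x₀‖⁻¹) • x₀, ?_⟩
    simp [norm_smul, norm_ne_zero_iff.mpr hx₀, inv_mul_cancel₀]
  obtain ⟨y₀, hy₀s, hy₀min⟩ := (isCompact_sphere (0 : Euc d) 1).exists_isMinOn hsne
    (isanorm_continuous hN).continuousOn
  have hy₀ : ‖y₀‖ = 1 := by simpa using hy₀s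
  have hy₀ne : y₀ ≠ 0 := by intro h; rw [h] at hy₀; simp at hy₀
  refine ⟨N y₀, (isanorm_nonneg hN y₀).lt_of_ne (fun h => hy₀ne ((hN.1 y₀).mp h.symm)), ?_⟩
  intro x
  rcases eq_or_ne x 0 with rfl | hx
  · simp [isanorm_zero hN]
  have hxs : (‖x‖⁻¹) • x ∈ Metric.sphere (0 : Euc d) 1 := by
    simp [norm_smul, norm_ne_zero_iff.mpr hx, inv_mul_cancel₀]
  have h5 : N y₀ ≤ N ((‖x‖⁻¹) • x) := hy₀min hxs
  have hNx : N ((‖x‖⁻¹) • x) = ‖x‖⁻¹ * N x := by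
    rw [hN.2.1]; congr 1
    rw [abs_of_nonneg (by positivity)]
  rw [hNx] at h5
  have hnx : (0:ℝ) < ‖x‖ := norm_pos_iff.mpr hx
  calc N y₀ * ‖x‖ ≤ (‖x‖⁻¹ * N x) * ‖x‖ := by
        exact mul_le_mul_of_nonneg_right h5 hnx.le
    _ = N x := by field_simp

section Aux2
variable {d : ℕ} {N : Euc d → ℝ}

lemma dualN_mem0 (hN : IsANorm N) (a : Euc d) :
    (0:ℝ) ∈ {r : ℝ | ∃ y : Euc d, N y ≤ 1 ∧ r = rinn a y} :=
  ⟨0, by simp [isanorm_zero hN], by simp [rinn]⟩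

lemma dualN_bdd (hN : IsANorm N) (a : Euc d) :
    BddAbove {r : ℝ | ∃ y : Euc d, N y ≤ 1 ∧ r = rinn a y} := by
  obtain ⟨m, hm, hlb⟩ := isanorm_lower hN
  refine ⟨‖a‖ / m, ?_⟩
  rintro r ⟨y, hy, rfl⟩
  have h1 : rinn a y ≤ ‖a‖ * ‖y‖ := real_inner_le_norm a y
  have h2 : ‖y‖ ≤ 1 / m := by
    rw [le_div_iff₀ hm]
    have := hlb y; linarith
  have h3 : ‖a‖ * ‖y‖ ≤ ‖a‖ * (1 / m) := by
    exact mul_le_mul_of_nonneg_left h2 (norm_nonneg a)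
  calc rinn a y ≤ ‖a‖ * ‖y‖ := h1
    _ ≤ ‖a‖ * (1 / m) := h3
    _ = ‖a‖ / m := by ring

lemma dualN_near (hN : IsANorm N) (a : Euc d) {ε : ℝ} (hε : 0 < ε) :
    ∃ y : Euc d, N y ≤ 1 ∧ dualN N a - ε < rinn a y := by
  have hne : {r : ℝ | ∃ y : Euc d, N y ≤ 1 ∧ r = rinn a y}.Nonempty := ⟨0, dualN_mem0 hN a⟩
  have hlt : dualN N a - ε < sSup {r : ℝ | ∃ y : Euc d, N y ≤ 1 ∧ r = rinn a y} :=
    sub_lt_self _ hε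
  obtain ⟨r, hrmem, hr⟩ := exists_lt_of_lt_csSup hne hlt
  obtain ⟨y, hy, rfl⟩ := hrmem
  exact ⟨y, hy, hr⟩

lemma dualN_pos (hN : IsANorm N) {a : Euc d} (ha : a ≠ 0) : 0 < dualN N a := by
  have hNa : 0 < N a := (isanorm_nonneg hN a).lt_of_ne (fun h => ha ((hN.1 a).mp h.symm))
  have hna : (0:ℝ) < ‖a‖ := norm_pos_iff.mpr ha
  have hmem : (N a)⁻¹ * ‖a‖^2 ∈ {r : ℝ | ∃ y : Euc d, N y ≤ 1 ∧ r = rinn a y} := by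
    refine ⟨(N a)⁻¹ • a, ?_, ?_⟩
    · rw [hN.2.1, abs_of_pos (inv_pos.mpr hNa)]
      rw [inv_mul_cancel₀ hNa.ne']
    · have h : rinn a ((N a)⁻¹ • a) = (N a)⁻¹ * ‖a‖^2 := by
        simp only [rinn, real_inner_smul_right, real_inner_self_eq_norm_sq]
      exact h.symm
  have hle := le_csSup (dualN_bdd hN a) hmem
  calc (0:ℝ) < (N a)⁻¹ * ‖a‖^2 := by positivity
    _ ≤ dualN N a := hle

lemma le_of_forall_pos_le_add' {a b : ℝ} (h : ∀ ε : ℝ, 0 < ε → a ≤ b + ε) : a ≤ b := by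
  by_contra hc
  push_neg at hc
  linarith [h ((a - b)/2) (by linarith)]

lemma limit_theta {A B : ℝ} (h : ∀ θ : ℝ, 0 < θ → θ < 1 → (1 - θ) * A ≤ B) : A ≤ B := by
  by_contra hc
  push_neg at hc
  rcases le_or_gt A 0 with hA | hA
  · have := h (1/2) one_half_pos one_half_lt_one
    linarith
  · set θ := min (1/2) ((A - B)/(2*A)) with hθdef
    have hθ0 : 0 < θ := lt_min one_half_pos (div_pos (by linarith) (by linarith))
    have hθ1 : θ < 1 := lt_of_le_of_lt (min_le_left _ _) (by norm_num)
    have hle := h θ hθ0 hθ1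
    have h2 : θ * A ≤ (A - B)/(2*A) * A := mul_le_mul_of_nonneg_right (min_le_right _ _) hA.le
    have hid : (A - B)/(2*A) * A = (A - B)/2 := by field_simp
    nlinarith

end Aux2

set_option maxHeartbeats 2000000 in
/-- Lemma (ii): strong convexity of the line-search objective and upper bound on
the exact step size under smoothness of `φ`. -/
theorem statement8 {d n : ℕ} (φ : Euc d → EReal) (C Dset : Set (Euc d))
    (f : Fin n → Euc d → ℝ) (f' : Fin n → Euc d → Euc d)
    (hφ : PhiAssump φ C) (hf : FAssump f f' Dset C)
    (hfin : ∀ x : Euc d, φ x ≠ ⊤)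
    (M : ℝ) (hM : 0 < M) (N : Euc d → ℝ) (hN : IsANorm N) (hsm : SmoothWrt φ M N)
    (x u : Euc d) (hu : subdiff φ x = {u})
    (i : Fin n) (hf0 : f i x ≠ 0) (hf'0 : f' i x ≠ 0) :
    (∀ s t θ : ℝ, 0 < θ → θ < 1 →
      lineObj φ f f' i x u (θ * s + (1 - θ) * t) ≤
        θ * lineObj φ f f' i x u s + (1 - θ) * lineObj φ f f' i x u t -
          (dualN N (f' i x)) ^ 2 / M / 2 * (θ * (1 - θ) * (s - t) ^ 2)) ∧
    ∀ t : ℝ, (∀ s : ℝ, lineObj φ f f' i x u t ≤ lineObj φ f f' i x u s) →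
      |t| ≤ M * |f i x| / (dualN N (f' i x)) ^ 2 := by
  classical
  have hbot : ∀ z, φ z ≠ ⊥ := hφ.proper.2
  set φr : Euc d → ℝ := fun z => (φ z).toReal with hφrdef
  have hφr : ∀ z, φ z = ((φr z : ℝ) : EReal) := fun z => (EReal.coe_toReal (hfin z) (hbot z)).symm
  -- real characterization of the subdifferential
  have hsubd : ∀ (x' u' : Euc d), u' ∈ subdiff φ x' ↔ ∀ y, φr x' + rinn u' (y - x') ≤ φr y := by
    intro x' u'
    simp only [subdiff, Set.mem_setOf_eq]
    constructor
    · rintro ⟨-, h⟩ y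
      have h2 := h y
      rw [hφr x', hφr y, ← EReal.coe_add, EReal.coe_le_coe_iff] at h2
      exact h2
    · intro h
      refine ⟨hfin x', fun y => ?_⟩
      rw [hφr x', hφr y, ← EReal.coe_add]
      exact EReal.coe_le_coe_iff.mpr (h y)
  -- real form of the smoothness upper bound
  have hsm2 : ∀ x' y u' : Euc d, u' ∈ subdiff φ x' →
      φr y ≤ φr x' + rinn u' (y - x') + M/2 * (N (x' - y))^2 := by
    intro x' y u' hu'
    have h := hsm.2 x' y u' hu'
    rw [breg, hφr x', hφr y, ← EReal.coe_sub, ← EReal.coe_sub, EReal.coe_le_coe_iff] at h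
    linarith
  obtain ⟨K, hK, hub⟩ := isanorm_upper hN
  -- continuity of φr
  have hcont : Continuous φr := by
    rw [continuous_iff_continuousAt]
    intro x₀
    obtain ⟨u₀, hu₀⟩ := hsm.1 x₀
    have hlow : ∀ y, φr x₀ + rinn u₀ (y - x₀) ≤ φr y := (hsubd x₀ u₀).mp hu₀
    have hhigh : ∀ y, φr y ≤ φr x₀ + rinn u₀ (y - x₀) + M/2 * (K * ‖x₀ - y‖)^2 := by
      intro y
      have h1 := hsm2 x₀ y u₀ hu₀
      have h2 : (N (x₀ - y))^2 ≤ (K * ‖x₀ - y‖)^2 := by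
        have ha := hub (x₀ - y)
        have hb := isanorm_nonneg hN (x₀ - y)
        nlinarith
      nlinarith
    have hcl : Continuous fun y : Euc d => φr x₀ + rinn u₀ (y - x₀) := by
      simp only [rinn]
      exact continuous_const.add (continuous_const.inner (continuous_id.sub continuous_const))
    have hl : Tendsto (fun y => φr x₀ + rinn u₀ (y - x₀)) (𝓝 x₀) (𝓝 (φr x₀)) := by
      have := hcl.tendsto x₀
      simpa [rinn] using this
    have hh : Tendsto (fun y => φr x₀ + rinn u₀ (y - x₀) + M/2 * (K * ‖x₀ - y‖)^2)
        (𝓝 x₀) (𝓝 (φr x₀)) := by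
      have hch : Continuous fun y : Euc d =>
          φr x₀ + rinn u₀ (y - x₀) + M/2 * (K * ‖x₀ - y‖)^2 := by
        simp only [rinn]
        fun_prop
      have := hch.tendsto x₀
      simpa [rinn] using this
    exact tendsto_of_tendsto_of_tendsto_of_le_of_le hl hh hlow hhigh
  -- existence of a maximizer in the conjugate sup
  have hmax : ∀ v : Euc d, ∃ xv : Euc d, ∀ y, rinn v y - φr y ≤ rinn v xv - φr xv := by
    intro v
    set F : Euc d → ℝ := fun y => rinn v y - φr y with hF
    have hFc : Continuous F := by
      simp only [hF, rinn]
      exact (continuous_const.inner continuous_id).sub hcont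
    obtain ⟨R, hR⟩ := hφ.coercive (‖v‖ + |F 0| + 1)
    set R' := max R 1 with hR'
    have hcb : IsCompact (Metric.closedBall (0:Euc d) R') := isCompact_closedBall _ _
    have h0B : (0:Euc d) ∈ Metric.closedBall 0 R' := by
      simp only [Metric.mem_closedBall, dist_self]
      exact le_trans (by norm_num) (le_max_right R 1)
    obtain ⟨xv, hxvB, hxvmax⟩ := hcb.exists_isMaxOn ⟨0, h0B⟩ hFc.continuousOn
    refine ⟨xv, fun y => ?_⟩
    by_cases hy : ‖y‖ ≤ R'
    · have : y ∈ Metric.closedBall (0:Euc d) R' := by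
        simpa [Metric.mem_closedBall, dist_zero_right] using hy
      exact hxvmax this
    · push_neg at hy
      have hyR : R ≤ ‖y‖ := le_trans (le_max_left _ _) hy.le
      have hφy : (‖v‖ + |F 0| + 1) * ‖y‖ ≤ φr y := by
        have h := hR y hyR
        rw [hφr y, EReal.coe_le_coe_iff] at h
        exact h
      have hin : rinn v y ≤ ‖v‖ * ‖y‖ := real_inner_le_norm v y
      have h1 : (1:ℝ) ≤ ‖y‖ := le_trans (le_max_right R 1) hy.le
      have hF0 : F 0 ≤ F xv := hxvmax h0B
      have habs := neg_abs_le (F 0)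
      have hstep : rinn v y - φr y ≤ -(|F 0| + 1) := by
        nlinarith [mul_nonneg (by positivity : (0:ℝ) ≤ |F 0| + 1)
          (by linarith : (0:ℝ) ≤ ‖y‖ - 1)]
      calc rinn v y - φr y ≤ -(|F 0| + 1) := hstep
        _ ≤ F 0 := by linarith
        _ ≤ F xv := hF0
        _ = rinn v xv - φr xv := rfl
  -- value of the conjugate at a point where the sup is attained
  have hconj : ∀ v xv : Euc d, (∀ y, rinn v y - φr y ≤ rinn v xv - φr xv) →
      rconj φ v = rinn v xv - φr xv := by
    intro v xv hm
    have he : econj φ v = ((rinn v xv - φr xv : ℝ) : EReal) := by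
      apply le_antisymm
      · rw [econj]
        apply iSup_le
        intro y
        rw [hφr y, ← EReal.coe_sub]
        exact EReal.coe_le_coe_iff.mpr (hm y)
      · have h := le_iSup (fun y : Euc d => ((rinn v y : ℝ) : EReal) - φ y) xv
        rw [hφr xv, ← EReal.coe_sub] at h
        exact h
    rw [rconj, he, EReal.toReal_coe]
  -- Fenchel-Young inequality
  have hFY : ∀ v y : Euc d, rinn v y - φr y ≤ rconj φ v := by
    intro v y
    obtain ⟨xv, hm⟩ := hmax v
    rw [hconj v xv hm]
    exact hm y
  -- a subgradient point maximizes the conjugate sup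
  have hsubconj : ∀ x' u' : Euc d, u' ∈ subdiff φ x' → rconj φ u' = rinn u' x' - φr x' := by
    intro x' u' hu'
    apply hconj
    intro y
    have h := (hsubd x' u').mp hu' y
    have hr : rinn u' (y - x') = rinn u' y - rinn u' x' := by
      simp only [rinn, inner_sub_right]
    rw [hr] at h
    linarith
  -- a maximizer of the conjugate sup is a subgradient point
  have hmaxsub : ∀ v xv : Euc d, (∀ y, rinn v y - φr y ≤ rinn v xv - φr xv) →
      v ∈ subdiff φ xv := by
    intro v xv hm
    rw [hsubd]
    intro y
    have h := hm y
    have hr : rinn v (y - xv) = rinn v y - rinn v xv := by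
      simp only [rinn, inner_sub_right]
    rw [hr]
    linarith
  have hD : 0 < dualN N (f' i x) := dualN_pos hN hf'0
  set D : ℝ := dualN N (f' i x) with hDdef
  -- key strong lower bound for the conjugate along the line
  have key : ∀ (lam : ℝ) (x' u' : Euc d), u' ∈ subdiff φ x' →
      rinn u' x' - φr x' + lam * rinn (f' i x) x' + lam^2 * D^2 / M / 2 ≤
        rconj φ (u' + lam • f' i x) := by
    intro lam x' u' hu'
    apply le_of_forall_pos_le_add'
    intro ε hε
    set δ : ℝ := ε * M / (lam^2 * D + 1) with hδdef
    have hlD : (0:ℝ) < lam^2 * D + 1 := by positivity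
    have hδ : 0 < δ := by positivity
    obtain ⟨yδ, hyδ1, hyδ2⟩ := dualN_near hN (f' i x) hδ
    rw [← hDdef] at hyδ2
    set z : Euc d := (lam * D / M) • yδ with hzdef
    have hFY' := hFY (u' + lam • f' i x) (x' + z)
    have hφz : φr (x' + z) ≤ φr x' + rinn u' z + M/2 * (N z)^2 := by
      have h := hsm2 x' (x' + z) u' hu'
      have h1 : x' + z - x' = z := by abel
      have h2 : x' - (x' + z) = -z := by abel
      rw [h1, h2, isanorm_neg hN] at h
      exact h
    have hinner : rinn (u' + lam • f' i x) (x' + z) =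
        rinn u' x' + rinn u' z + lam * rinn (f' i x) x' + lam * rinn (f' i x) z := by
      simp only [rinn, inner_add_left, inner_add_right, real_inner_smul_left]
      ring
    rw [hinner] at hFY'
    have hNz : N z ≤ |lam| * D / M := by
      rw [hzdef, hN.2.1]
      have h1 : |lam * D / M| = |lam| * D / M := by
        rw [abs_div, abs_mul, abs_of_pos hD, abs_of_pos hM]
      rw [h1]
      have h2 : (0:ℝ) ≤ |lam| * D / M := by positivity
      calc |lam| * D / M * N yδ ≤ |lam| * D / M * 1 :=
            mul_le_mul_of_nonneg_left hyδ1 h2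
        _ = |lam| * D / M := by ring
    have haz : lam * rinn (f' i x) z = lam^2 * D / M * rinn (f' i x) yδ := by
      rw [hzdef]
      simp only [rinn, real_inner_smul_right]
      ring
    have hA : lam^2 * D / M * (D - δ) ≤ lam * rinn (f' i x) z := by
      rw [haz]
      exact mul_le_mul_of_nonneg_left hyδ2.le (by positivity)
    have hB : M/2 * (N z)^2 ≤ lam^2 * D^2 / (2*M) := by
      have h0 := isanorm_nonneg hN z
      have h2 : (N z)^2 ≤ (|lam| * D / M)^2 := by nlinarith [hNz]
      have h3 : (|lam| * D / M)^2 = lam^2 * D^2 / M^2 := by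
        rw [div_pow, mul_pow, sq_abs]
      rw [h3] at h2
      have h4 : M/2 * (lam^2 * D^2 / M^2) = lam^2 * D^2 / (2*M) := by
        field_simp
      nlinarith
    have hδε : lam^2 * D * δ / M ≤ ε := by
      rw [div_le_iff₀ hM, hδdef]
      have h5 : lam^2 * D * (ε * M / (lam^2 * D + 1)) = ε * M * (lam^2 * D) / (lam^2 * D + 1) := by
        ring
      rw [h5, div_le_iff₀ hlD]
      nlinarith [mul_pos hε hM]
    have hid : lam^2 * D / M * (D - δ) = lam^2 * D^2 / M - lam^2 * D * δ / M := by ring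
    have hlink : lam^2 * D^2 / (2*M) = lam^2 * D^2 / M / 2 := by ring
    simp only [div_eq_mul_inv, mul_inv] at hFY' hφz hA hB hδε hid hlink ⊢
    linarith
  -- Part 1: strong convexity of the line objective
  have part1 : ∀ s t θ : ℝ, 0 < θ → θ < 1 →
      lineObj φ f f' i x u (θ * s + (1 - θ) * t) ≤
        θ * lineObj φ f f' i x u s + (1 - θ) * lineObj φ f f' i x u t -
          D ^ 2 / M / 2 * (θ * (1 - θ) * (s - t) ^ 2) := by
    intro s t θ hθ0 hθ1
    obtain ⟨xτ, hxτ⟩ := hmax (u - (θ * s + (1 - θ) * t) • f' i x)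
    have hvτ := hmaxsub _ _ hxτ
    have hAτ := hconj _ _ hxτ
    have h1 := key ((θ * s + (1 - θ) * t) - s) xτ _ hvτ
    have h2 := key ((θ * s + (1 - θ) * t) - t) xτ _ hvτ
    have e1 : (u - (θ * s + (1 - θ) * t) • f' i x) + ((θ * s + (1 - θ) * t) - s) • f' i x =
        u - s • f' i x := by module
    have e2 : (u - (θ * s + (1 - θ) * t) • f' i x) + ((θ * s + (1 - θ) * t) - t) • f' i x =
        u - t • f' i x := by module
    rw [e1] at h1
    rw [e2] at h2
    have hvexp : rinn (u - (θ * s + (1 - θ) * t) • f' i x) xτ =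
        rinn u xτ - (θ * s + (1 - θ) * t) * rinn (f' i x) xτ := by
      simp only [rinn, inner_sub_left, real_inner_smul_left]
    rw [hvexp] at h1 h2 hAτ
    have m1 := mul_le_mul_of_nonneg_left h1 hθ0.le
    have m2 := mul_le_mul_of_nonneg_left h2 (by linarith : (0:ℝ) ≤ 1 - θ)
    simp only [lineObj]
    rw [hAτ]
    simp only [div_eq_mul_inv] at m1 m2 ⊢
    linarith [m1, m2]
  refine ⟨part1, ?_⟩
  -- Part 2
  intro tm hmin
  have hux : u ∈ subdiff φ x := by rw [hu]; rfl
  have hconju : rconj φ u = rinn u x - φr x := hsubconj x u hux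
  -- affine lower bound coming from Fenchel-Young at x
  have hL1 : ∀ tt : ℝ, lineObj φ f f' i x u 0 - tt * f i x ≤ lineObj φ f f' i x u tt := by
    intro tt
    have hfy := hFY (u - tt • f' i x) x
    have hexp : rinn (u - tt • f' i x) x = rinn u x - tt * rinn (f' i x) x := by
      simp only [rinn, inner_sub_left, real_inner_smul_left]
    rw [hexp] at hfy
    simp only [lineObj]
    have hz : u - (0:ℝ) • f' i x = u := by simp
    rw [hz, hconju]
    linarith
  -- descent bound at the minimizer
  have hL3 : D^2/M/2 * tm^2 ≤ lineObj φ f f' i x u 0 - lineObj φ f f' i x u tm := by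
    apply limit_theta
    intro θ hθ0 hθ1
    have hp := part1 0 tm θ hθ0 hθ1
    have hmn := hmin (θ * 0 + (1 - θ) * tm)
    have hkey : θ * ((1 - θ) * (D^2/M/2 * tm^2)) ≤
        θ * (lineObj φ f f' i x u 0 - lineObj φ f f' i x u tm) := by
      simp only [div_eq_mul_inv] at hp ⊢
      linarith [hp, hmn]
    exact le_of_mul_le_mul_left hkey hθ0
  -- strengthened subgradient bound at 0
  have hL2 : D^2/M/2 * tm^2 ≤ lineObj φ f f' i x u tm - lineObj φ f f' i x u 0 + tm * f i x := by
    apply limit_theta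
    intro θ hθ0 hθ1
    have hp := part1 tm 0 θ hθ0 hθ1
    have hl1 := hL1 (θ * tm + (1 - θ) * 0)
    have hkey : θ * ((1 - θ) * (D^2/M/2 * tm^2)) ≤
        θ * (lineObj φ f f' i x u tm - lineObj φ f f' i x u 0 + tm * f i x) := by
      simp only [div_eq_mul_inv] at hp hl1 ⊢
      linarith [hp, hl1]
    exact le_of_mul_le_mul_left hkey hθ0
  -- combine
  have hsum : D^2 * tm^2 / M ≤ tm * f i x := by
    simp only [div_eq_mul_inv] at hL2 hL3 ⊢
    linarith
  rw [div_le_iff₀ hM] at hsum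
  rw [le_div_iff₀ (pow_pos hD 2)]
  rcases eq_or_ne tm 0 with rfl | htm
  · simp only [abs_zero, zero_mul]
    positivity
  · have htp : 0 < |tm| := abs_pos.mpr htm
    have habs : tm * f i x ≤ |tm| * |f i x| := by
      calc tm * f i x ≤ |tm * f i x| := le_abs_self _
        _ = |tm| * |f i x| := abs_mul _ _
    have h7 : tm * f i x * M ≤ |tm| * |f i x| * M :=
      mul_le_mul_of_nonneg_right habs hM.le
    rw [show tm^2 = |tm| * |tm| by rw [← sq_abs]; ring] at hsum
    have h9 : D^2 * |tm| * |tm| ≤ M * |f i x| * |tm| := by linarith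
    have h10 := (mul_le_mul_iff_of_pos_right htp).mp h9
    linarith
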